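/- arXiv:2312.04196 — 3 statements merged into one kernel-verified Lean document; each statement's English description precedes it below -/
import Mathlib

section
/- Let G be a group generated by two elements x and y. Define a two-variable filtration G(m₁,m₂) for (m₁,m₂) ∈ ℕ² \ {(0,0)} by: G(1,0) is the normal closure of {x}, G(0,1) is the normal closure of {y}, and for |m| = m₁+m₂ ≥ 2, G(m) is the subgroup generated by all commutator subgroups [G(m'), G(m'')] with m' + m'' = m (componentwise, both m', m'' nonzero). Then for every (m₁,m₂) with m₁+m₂ ≥ 1, G(m₁,m₂) is contained in the (m₁+m₂)-th term of the lower central series of G (with the convention that the first term of the lower central series is G itself). -/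
/-- Three subgroups lemma, general form. -/
theorem three_subgroups {G : Type*} [Group G] {A B C N : Subgroup G} [N.Normal]
    (h1 : ⁅⁅B, C⁆, A⁆ ≤ N) (h2 : ⁅⁅C, A⁆, B⁆ ≤ N) : ⁅⁅A, B⁆, C⁆ ≤ N := by
  let f := QuotientGroup.mk' N
  have hker : f.ker = N := QuotientGroup.ker_mk' N
  have key : ∀ {X Y Z : Subgroup G}, ⁅⁅X, Y⁆, Z⁆ ≤ N →
      ⁅⁅X.map f, Y.map f⁆, Z.map f⁆ = ⊥ := by
    intro X Y Z h
    rw [← Subgroup.map_commutator, ← Subgroup.map_commutator,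
      Subgroup.map_eq_bot_iff, hker]
    exact h
  have := Subgroup.commutator_commutator_eq_bot_of_rotate (key h1) (key h2)
  rw [← Subgroup.map_commutator, ← Subgroup.map_commutator,
    Subgroup.map_eq_bot_iff, hker] at this
  exact this

theorem lcs_comm_le {G : Type*} [Group G] :
    ∀ j i, ⁅(⊤ : Subgroup G).lowerCentralSeries i, (⊤ : Subgroup G).lowerCentralSeries j⁆ ≤
      (⊤ : Subgroup G).lowerCentralSeries (i + j + 1) := by
  intro j
  induction j with
  | zero =>
    intro i
    rw [Subgroup.lowerCentralSeries_zero]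
    exact le_of_eq rfl
  | succ j ih =>
    intro i
    show ⁅(⊤ : Subgroup G).lowerCentralSeries i, ⁅(⊤ : Subgroup G).lowerCentralSeries j, ⊤⁆⁆ ≤ _
    rw [Subgroup.commutator_comm]
    refine three_subgroups ?_ ?_
    · calc ⁅⁅⊤, (⊤ : Subgroup G).lowerCentralSeries i⁆, (⊤ : Subgroup G).lowerCentralSeries j⁆
          ≤ ⁅(⊤ : Subgroup G).lowerCentralSeries (i + 1), (⊤ : Subgroup G).lowerCentralSeries j⁆ := by
            refine Subgroup.commutator_mono ?_ le_rfl
            rw [Subgroup.commutator_comm]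
            exact le_of_eq rfl
        _ ≤ (⊤ : Subgroup G).lowerCentralSeries (i + 1 + j + 1) := ih (i + 1)
        _ = (⊤ : Subgroup G).lowerCentralSeries (i + (j + 1) + 1) := by ring_nf
    · calc ⁅⁅(⊤ : Subgroup G).lowerCentralSeries i, (⊤ : Subgroup G).lowerCentralSeries j⁆, ⊤⁆
          ≤ ⁅(⊤ : Subgroup G).lowerCentralSeries (i + j + 1), ⊤⁆ :=
            Subgroup.commutator_mono (ih i) le_rfl
        _ = (⊤ : Subgroup G).lowerCentralSeries (i + j + 1 + 1) := rfl
        _ = (⊤ : Subgroup G).lowerCentralSeries (i + (j + 1) + 1) := by ring_nf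

/-- the two-variable filtration `F (m₁, m₂)` on a group generated by
two elements `x, y` is contained in the lower central series:
`F (m₁, m₂) ≤ γ_{m₁+m₂}(G)` (with `γ₁ G = G`, i.e. `(⊤ : Subgroup G).lowerCentralSeries 0 = ⊤`). -/
theorem statement0 {G : Type*} [Group G] (x y : G)
    (hgen : Subgroup.closure {x, y} = ⊤)
    (F : ℕ × ℕ → Subgroup G)
    (h10 : F (1, 0) = Subgroup.normalClosure {x})
    (h01 : F (0, 1) = Subgroup.normalClosure {y})
    (hrec : ∀ m : ℕ × ℕ, 2 ≤ m.1 + m.2 →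
      F m = ⨆ (q : (ℕ × ℕ) × (ℕ × ℕ)) (_ : q.1 ≠ 0) (_ : q.2 ≠ 0) (_ : q.1 + q.2 = m),
        ⁅F q.1, F q.2⁆) :
    ∀ m : ℕ × ℕ, 1 ≤ m.1 + m.2 → F m ≤ (⊤ : Subgroup G).lowerCentralSeries (m.1 + m.2 - 1) := by
  have main : ∀ n : ℕ, ∀ m : ℕ × ℕ, m.1 + m.2 = n → 1 ≤ n →
      F m ≤ (⊤ : Subgroup G).lowerCentralSeries (n - 1) := by
    intro n
    induction n using Nat.strong_induction_on with
    | _ n ih =>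
      intro m hm hn
      rcases eq_or_lt_of_le hn with h1 | h2
      · simp only [← h1, Subgroup.lowerCentralSeries_zero]
        exact le_top
      · rw [hrec m (by omega)]
        refine iSup_le fun q => iSup_le fun hq1 => iSup_le fun hq2 => iSup_le fun hq => ?_
        have ha : 1 ≤ q.1.1 + q.1.2 := by
          rcases Nat.eq_zero_or_pos (q.1.1 + q.1.2) with h | h
          · obtain ⟨h1, h2⟩ := Nat.add_eq_zero.mp h
            exact absurd (Prod.ext h1 h2) hq1
          · exact h
        have hb : 1 ≤ q.2.1 + q.2.2 := by
          rcases Nat.eq_zero_or_pos (q.2.1 + q.2.2) with h | h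
          · obtain ⟨h1, h2⟩ := Nat.add_eq_zero.mp h
            exact absurd (Prod.ext h1 h2) hq2
          · exact h
        have hsum : q.1.1 + q.1.2 + (q.2.1 + q.2.2) = n := by
          have := congrArg Prod.fst hq
          have := congrArg Prod.snd hq
          simp_all [Prod.ext_iff]
          omega
        have hA : F q.1 ≤ (⊤ : Subgroup G).lowerCentralSeries (q.1.1 + q.1.2 - 1) :=
          ih _ (by omega) q.1 rfl ha
        have hB : F q.2 ≤ (⊤ : Subgroup G).lowerCentralSeries (q.2.1 + q.2.2 - 1) :=
          ih _ (by omega) q.2 rfl hb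
        calc ⁅F q.1, F q.2⁆
            ≤ ⁅(⊤ : Subgroup G).lowerCentralSeries (q.1.1 + q.1.2 - 1),
                (⊤ : Subgroup G).lowerCentralSeries (q.2.1 + q.2.2 - 1)⁆ :=
              Subgroup.commutator_mono hA hB
          _ ≤ (⊤ : Subgroup G).lowerCentralSeries ((q.1.1 + q.1.2 - 1) + (q.2.1 + q.2.2 - 1) + 1) :=
              lcs_comm_le _ _
          _ = (⊤ : Subgroup G).lowerCentralSeries (n - 1) := by congr 1; omega
  intro m hm
  exact main (m.1 + m.2) m rfl hm
end

section
/- Let G be a group generated by two elements x and y, with the two-variable filtration G(m₁,m₂) defined by: G(1,0) = normal closure of {x}, G(0,1) = normal closure of {y}, and G(m) = ⟨[G(m'),G(m'')] : m'+m''=m, m',m'' ≠ (0,0)⟩ for |m| ≥ 2. Then for every integer m ≥ 2, G(m,0) = G(m,1), and symmetrically G(0,m) = G(1,m). -/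
open Subgroup

theorem aux_normal_iSup {G : Type*} [Group G] {ι : Sort*} (f : ι → Subgroup G)
    (h : ∀ i, (f i).Normal) : (⨆ i, f i).Normal := by
  constructor
  intro n hn g
  rw [iSup_eq_closure] at hn ⊢
  induction hn using closure_induction with
  | mem a ha =>
    obtain ⟨_, ⟨i, rfl⟩, ha⟩ := ha
    exact subset_closure ⟨_, ⟨i, rfl⟩, (h i).conj_mem a ha g⟩
  | one => simpa using one_mem _
  | mul a b _ _ ha hb => simpa [mul_assoc] using mul_mem ha hb
  | inv a _ ha => simpa [mul_assoc] using inv_mem ha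

theorem aux_key {G : Type*} [Group G] (x y : G)
    (hgen : Subgroup.closure {x, y} = ⊤)
    (F : ℕ × ℕ → Subgroup G)
    (h10 : F (1, 0) = Subgroup.normalClosure {x})
    (h01 : F (0, 1) = Subgroup.normalClosure {y})
    (hrec : ∀ m : ℕ × ℕ, 2 ≤ m.1 + m.2 →
      F m = ⨆ (q : (ℕ × ℕ) × (ℕ × ℕ)) (_ : q.1 ≠ 0) (_ : q.2 ≠ 0) (_ : q.1 + q.2 = m),
        ⁅F q.1, F q.2⁆) :
    ∀ m : ℕ, 2 ≤ m → F (m, 0) = F (m, 1) := by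
  -- each F p (p ≠ 0) is normal
  have hnormal : ∀ n : ℕ, ∀ p : ℕ × ℕ, p.1 + p.2 = n → p ≠ 0 → (F p).Normal := by
    intro n
    induction n using Nat.strong_induction_on with
    | _ n ih =>
      intro p hp hp0
      match n, p, hp with
      | 0, p, hp => exact absurd (by simp [Prod.ext_iff]; omega) hp0
      | 1, p, hp =>
        obtain ⟨a, b⟩ := p
        rcases (by omega : a = 1 ∧ b = 0 ∨ a = 0 ∧ b = 1) with ⟨rfl, rfl⟩ | ⟨rfl, rfl⟩
        · rw [h10]; exact normalClosure_normal
        · rw [h01]; exact normalClosure_normal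
      | (n+2), p, hp =>
        rw [hrec p (by omega)]
        apply aux_normal_iSup; intro q
        apply aux_normal_iSup; intro hq1
        apply aux_normal_iSup; intro hq2
        apply aux_normal_iSup; intro hq3
        have e1 : q.1.1 + q.2.1 = p.1 := by rw [← hq3]; rfl
        have e2 : q.1.2 + q.2.2 = p.2 := by rw [← hq3]; rfl
        have n1 : q.1.1 + q.1.2 ≠ 0 := by
          intro h; exact hq1 (by simp [Prod.ext_iff]; omega)
        have n2 : q.2.1 + q.2.2 ≠ 0 := by
          intro h; exact hq2 (by simp [Prod.ext_iff]; omega)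
        haveI := ih (q.1.1 + q.1.2) (by omega) q.1 rfl (by intro h; apply n1; rw [h]; rfl)
        haveI := ih (q.2.1 + q.2.2) (by omega) q.2 rfl (by intro h; apply n2; rw [h]; rfl)
        exact Subgroup.commutator_normal _ _
  have hN : ∀ p : ℕ × ℕ, p ≠ 0 → (F p).Normal := fun p hp => hnormal (p.1 + p.2) p rfl hp
  -- decomposition inclusion
  have hdec : ∀ (p q1 q2 : ℕ × ℕ), q1 ≠ 0 → q2 ≠ 0 → q1 + q2 = p → 2 ≤ p.1 + p.2 →
      ⁅F q1, F q2⁆ ≤ F p := by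
    intro p q1 q2 h1 h2 h3 h4
    rw [hrec p h4]
    exact le_iSup_of_le (q1, q2) (le_iSup_of_le h1 (le_iSup_of_le h2 (le_iSup_of_le h3 le_rfl)))
  have hne : ∀ a b : ℕ, a + b ≠ 0 → ((a, b) : ℕ × ℕ) ≠ 0 := by
    intro a b h hc
    rw [Prod.ext_iff] at hc
    simp only [Prod.fst_zero, Prod.snd_zero] at hc
    omega
  -- monotonicity : F (a,1) ≤ F (a,0) for a ≥ 1
  have hsub : ∀ a : ℕ, 1 ≤ a → F (a, 1) ≤ F (a, 0) := by
    intro a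
    induction a using Nat.strong_induction_on with
    | _ a ih =>
      intro ha
      haveI := hN (a, 0) (hne a 0 (by omega))
      rw [hrec (a, 1) (by simp; omega)]
      apply iSup_le; intro q
      apply iSup_le; intro hq1
      apply iSup_le; intro hq2
      apply iSup_le; intro hq3
      obtain ⟨⟨c, s⟩, ⟨d, t⟩⟩ := q
      have e1 : c + d = a := by have := congrArg Prod.fst hq3; simpa using this
      have e2 : s + t = 1 := by have := congrArg Prod.snd hq3; simpa using this
      rcases (by omega : s = 1 ∧ t = 0 ∨ s = 0 ∧ t = 1) with ⟨rfl, rfl⟩ | ⟨rfl, rfl⟩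
      · -- q = ((c,1),(d,0)), d ≥ 1
        have hd : 1 ≤ d := by
          by_contra h
          exact hq2 (by simp [Prod.ext_iff]; omega)
        rcases Nat.eq_zero_or_pos c with rfl | hc
        · -- [F(0,1), F(a,0)]
          simp only at hq3 ⊢
          have : d = a := by omega
          subst this
          exact Subgroup.commutator_le_right _ _
        · have : F (c, 1) ≤ F (c, 0) := ih c (by omega) hc
          calc ⁅F (c, 1), F (d, 0)⁆ ≤ ⁅F (c, 0), F (d, 0)⁆ :=
                Subgroup.commutator_mono this le_rfl
            _ ≤ F (a, 0) := hdec (a, 0) (c, 0) (d, 0) (hne c 0 (by omega)) (hne d 0 (by omega))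
                (by simp [Prod.ext_iff]; omega) (by simp; omega)
      · -- q = ((c,0),(d,1)), c ≥ 1
        have hc : 1 ≤ c := by
          by_contra h
          exact hq1 (by simp [Prod.ext_iff]; omega)
        rcases Nat.eq_zero_or_pos d with rfl | hd
        · have : c = a := by omega
          subst this
          exact Subgroup.commutator_le_left _ _
        · have : F (d, 1) ≤ F (d, 0) := ih d (by omega) hd
          calc ⁅F (c, 0), F (d, 1)⁆ ≤ ⁅F (c, 0), F (d, 0)⁆ :=
                Subgroup.commutator_mono le_rfl this
            _ ≤ F (a, 0) := hdec (a, 0) (c, 0) (d, 0) (hne c 0 (by omega)) (hne d 0 (by omega))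
                (by simp [Prod.ext_iff]; omega) (by simp; omega)
  -- x is in F (1,0)
  have hxF : x ∈ F (1, 0) := h10 ▸ subset_normalClosure rfl
  -- [y, x] lies in F (1,1)
  have hyx : ⁅F (0, 1), F (1, 0)⁆ ≤ F (1, 1) :=
    hdec (1, 1) (0, 1) (1, 0) (hne 0 1 (by omega)) (hne 1 0 (by omega))
      (by simp [Prod.ext_iff]) (by simp)
  haveI hN11 : (F (1, 1)).Normal := hN (1, 1) (hne 1 1 (by omega))
  set π : G →* G ⧸ F (1, 1) := QuotientGroup.mk' (F (1, 1)) with hπ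
  -- π x is central
  have hcommyx : Commute (π y) (π x) := by
    rw [← commutatorElement_eq_one_iff_commute, ← map_commutatorElement]
    exact (QuotientGroup.eq_one_iff _).mpr
      (hyx (commutator_mem_commutator (h01 ▸ subset_normalClosure rfl) hxF))
  have hcentral : ∀ g : G, Commute (π x) (π g) := by
    intro g
    have hg : g ∈ closure {x, y} := hgen ▸ mem_top g
    induction hg using closure_induction with
    | mem a ha =>
      rcases ha with rfl | rfl
      · exact Commute.refl _
      · exact hcommyx.symm
    | one => simpa using Commute.one_right _
    | mul a b _ _ ha hb => simpa using ha.mul_right hb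
    | inv a _ ha => simpa using ha.inv_right
  -- F (1,0) ≤ ⟨x⟩ ⊔ F (1,1)
  have hclxnormal : (closure {π x}).Normal := by
    constructor
    intro n hn g
    have hn' : ∀ h : G ⧸ F (1, 1), Commute n h := by
      intro h
      induction hn using closure_induction with
      | mem a ha => rw [Set.mem_singleton_iff] at ha; subst ha
                    obtain ⟨g', rfl⟩ := QuotientGroup.mk'_surjective (F (1,1)) h
                    exact hcentral g'
      | one => exact Commute.one_left _
      | mul a b _ _ ha hb => exact ha.mul_left hb
      | inv a _ ha => exact ha.inv_left
    rw [(hn' g).symm.eq, mul_assoc, mul_inv_cancel, mul_one]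
    exact hn
  have h10sub : F (1, 0) ≤ closure {x} ⊔ F (1, 1) := by
    have hmap : Subgroup.map π (F (1, 0)) ≤ Subgroup.map π (closure {x}) := by
      rw [h10, Subgroup.map_normalClosure _ _ (QuotientGroup.mk'_surjective _),
        MonoidHom.map_closure]
      have himg : π '' {x} = {π x} := Set.image_singleton
      rw [himg]
      exact normalClosure_le_normal subset_closure
    calc F (1, 0) ≤ comap π (Subgroup.map π (F (1, 0))) := le_comap_map _ _
      _ ≤ comap π (Subgroup.map π (closure {x})) := comap_mono hmap
      _ = closure {x} ⊔ F (1, 1) := by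
          rw [comap_map_eq, hπ, QuotientGroup.ker_mk']
  -- the m = 2 step : [F(1,0), F(1,0)] ≤ F (2,1)
  have m2 : ⁅F (1, 0), F (1, 0)⁆ ≤ F (2, 1) := by
    haveI : (F (2, 1)).Normal := hN (2, 1) (hne 2 1 (by omega))
    set π2 : G →* G ⧸ F (2, 1) := QuotientGroup.mk' (F (2, 1)) with hπ2
    have hcent : ∀ c ∈ F (1, 1), ∀ d ∈ F (1, 0), Commute (π2 c) (π2 d) := by
      intro c hc d hd
      rw [← commutatorElement_eq_one_iff_commute, ← map_commutatorElement]
      exact (QuotientGroup.eq_one_iff _).mpr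
        (hdec (2, 1) (1, 1) (1, 0) (hne 1 1 (by omega)) (hne 1 0 (by omega))
          (by simp [Prod.ext_iff]) (by simp) (commutator_mem_commutator hc hd))
    have hsub' : F (1, 0) ≤ closure ({x} ∪ (F (1, 1) : Set G)) := by
      rw [← closure_eq (F (1, 1)), ← Subgroup.closure_union] at h10sub
      exact h10sub
    have hSle : closure ({x} ∪ (F (1, 1) : Set G)) ≤ F (1, 0) :=
      (closure_le _).mpr (Set.union_subset (by simpa using hxF) (hsub 1 le_rfl))
    have hx_comm : ∀ b ∈ closure ({x} ∪ (F (1, 1) : Set G)), Commute (π2 x) (π2 b) := by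
      intro b hb
      induction hb using closure_induction with
      | mem b hb2 =>
        rcases hb2 with hb2 | hb2
        · rw [show b = x from hb2]
        · exact (hcent b hb2 x hxF).symm
      | one => simpa using Commute.one_right _
      | mul b c _ _ hb hc => simpa using hb.mul_right hc
      | inv b _ hb => simpa using hb.inv_right
    have main : ∀ a ∈ closure ({x} ∪ (F (1, 1) : Set G)),
        ∀ b ∈ closure ({x} ∪ (F (1, 1) : Set G)), Commute (π2 a) (π2 b) := by
      intro a ha
      induction ha using closure_induction with
      | mem a ha =>
        rcases ha with ha | ha
        · intro b hb
          rw [show a = x from ha]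
          exact hx_comm b hb
        · intro b hb
          exact hcent a ha b (hSle hb)
      | one => intro b hb; simpa using Commute.one_left _
      | mul a c _ _ ha hc => intro b hb; simpa using (ha b hb).mul_left (hc b hb)
      | inv a _ ha => intro b hb; simpa using (ha b hb).inv_left
    rw [Subgroup.commutator_le]
    intro a ha b hb
    have : Commute (π2 a) (π2 b) := main a (hsub' ha) b (hsub' hb)
    rw [← commutatorElement_eq_one_iff_commute, ← map_commutatorElement] at this
    exact (QuotientGroup.eq_one_iff _).mp this
  -- final strong induction
  intro m
  induction m using Nat.strong_induction_on with
  | _ m ih =>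
    intro hm
    refine le_antisymm ?_ (hsub m (by omega))
    rw [hrec (m, 0) (by simp; omega)]
    apply iSup_le; intro q
    apply iSup_le; intro hq1
    apply iSup_le; intro hq2
    apply iSup_le; intro hq3
    obtain ⟨⟨a, s⟩, ⟨b, t⟩⟩ := q
    have e1 : a + b = m := by have := congrArg Prod.fst hq3; simpa using this
    have e2 : s + t = 0 := by have := congrArg Prod.snd hq3; simpa using this
    have hs : s = 0 := by omega
    have ht : t = 0 := by omega
    subst hs; subst ht
    have ha : 1 ≤ a := by
      by_contra h
      exact hq1 (by simp [Prod.ext_iff]; omega)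
    have hb : 1 ≤ b := by
      by_contra h
      exact hq2 (by simp [Prod.ext_iff]; omega)
    by_cases hb2 : 2 ≤ b
    · rw [show F (b, 0) = F (b, 1) from ih b (by omega) hb2]
      exact hdec (m, 1) (a, 0) (b, 1) (hne a 0 (by omega)) (hne b 1 (by omega))
        (by simp [Prod.ext_iff]; omega) (by simp; omega)
    · by_cases ha2 : 2 ≤ a
      · rw [show F (a, 0) = F (a, 1) from ih a (by omega) ha2]
        exact hdec (m, 1) (a, 1) (b, 0) (hne a 1 (by omega)) (hne b 0 (by omega))
          (by simp [Prod.ext_iff]; omega) (by simp; omega)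
      · have ha1 : a = 1 := by omega
        have hb1 : b = 1 := by omega
        have hm2 : m = 2 := by omega
        subst ha1; subst hb1; subst hm2
        exact m2

/-- for the two-variable filtration on a group generated by `x, y`,
we have `F (m, 0) = F (m, 1)` and `F (0, m) = F (1, m)` for every `m ≥ 2`. -/
theorem statement1 {G : Type*} [Group G] (x y : G)
    (hgen : Subgroup.closure {x, y} = ⊤)
    (F : ℕ × ℕ → Subgroup G)
    (h10 : F (1, 0) = Subgroup.normalClosure {x})
    (h01 : F (0, 1) = Subgroup.normalClosure {y})
    (hrec : ∀ m : ℕ × ℕ, 2 ≤ m.1 + m.2 →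
      F m = ⨆ (q : (ℕ × ℕ) × (ℕ × ℕ)) (_ : q.1 ≠ 0) (_ : q.2 ≠ 0) (_ : q.1 + q.2 = m),
        ⁅F q.1, F q.2⁆) :
    ∀ m : ℕ, 2 ≤ m → F (m, 0) = F (m, 1) ∧ F (0, m) = F (1, m) := by
  have h1 := aux_key x y hgen F h10 h01 hrec
  have hgen' : Subgroup.closure {y, x} = ⊤ := by rwa [Set.pair_comm]
  have swne : ∀ p : ℕ × ℕ, p ≠ 0 → ((p.2, p.1) : ℕ × ℕ) ≠ 0 := by
    intro p hp hc
    apply hp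
    rw [Prod.ext_iff] at hc ⊢
    simp only [Prod.fst_zero, Prod.snd_zero] at *
    exact ⟨hc.2, hc.1⟩
  have hrec' : ∀ m : ℕ × ℕ, 2 ≤ m.1 + m.2 →
      F (m.2, m.1) = ⨆ (q : (ℕ × ℕ) × (ℕ × ℕ)) (_ : q.1 ≠ 0) (_ : q.2 ≠ 0) (_ : q.1 + q.2 = m),
        ⁅F (q.1.2, q.1.1), F (q.2.2, q.2.1)⁆ := by
    intro m hm
    rw [hrec (m.2, m.1) (by omega)]
    apply le_antisymm
    · apply iSup_le; intro q
      apply iSup_le; intro hq1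
      apply iSup_le; intro hq2
      apply iSup_le; intro hq3
      refine le_iSup_of_le ((q.1.2, q.1.1), (q.2.2, q.2.1))
        (le_iSup_of_le (swne _ hq1) (le_iSup_of_le (swne _ hq2) (le_iSup_of_le ?_ le_rfl)))
      rw [Prod.ext_iff] at hq3 ⊢
      exact ⟨hq3.2, hq3.1⟩
    · apply iSup_le; intro q
      apply iSup_le; intro hq1
      apply iSup_le; intro hq2
      apply iSup_le; intro hq3
      refine le_iSup_of_le ((q.1.2, q.1.1), (q.2.2, q.2.1))
        (le_iSup_of_le (swne _ hq1) (le_iSup_of_le (swne _ hq2) (le_iSup_of_le ?_ le_rfl)))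
      rw [Prod.ext_iff] at hq3 ⊢
      exact ⟨hq3.2, hq3.1⟩
  have h2 := aux_key y x hgen' (fun p => F (p.2, p.1)) h01 h10 hrec'
  intro m hm
  exact ⟨h1 m hm, h2 m hm⟩
end

section
/- Let G be a group generated by two elements x and y, with two-variable filtration G(m₁,m₂) as above. Let f : G → G be an automorphism with f(x)·x⁻¹ ∈ G(m + (1,0)) and f(y)·y⁻¹ ∈ G(m + (0,1)), for a fixed m = (m₁,m₂) with |m| ≥ 1. Then f(g)·g⁻¹ ∈ G(m + (1,0)) for every g in G(1,0) of the form g = yⁿ x y⁻ⁿ (n ∈ ℤ); more precisely, f(yⁿ x y⁻ⁿ)·(yⁿ x⁻¹ y⁻ⁿ) ∈ G(m + (1,0)) for every integer n. -/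
private lemma normal_iSup_aux {G : Type*} [Group G] {ι : Sort*} {K : ι → Subgroup G}
    (h : ∀ i, (K i).Normal) : (⨆ i, K i).Normal := by
  constructor
  intro n hn g
  have hmap : (⨆ i, K i).map (MulAut.conj g).toMonoidHom ≤ ⨆ i, K i := by
    rw [Subgroup.map_iSup]
    refine iSup_le fun i => le_trans ?_ (le_iSup K i)
    rintro - ⟨k, hk, rfl⟩
    exact (h i).conj_mem k hk g
  exact hmap ⟨n, hn, rfl⟩

private lemma pos_of_ne_zero' {a : ℕ × ℕ} (h : a ≠ 0) : 1 ≤ a.1 + a.2 := by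
  rcases a with ⟨a1, a2⟩
  by_contra hc
  push_neg at hc
  exact h (by simp only [Prod.mk_eq_zero]; omega)

private lemma mk_eq_of {G : Type*} [Group G] (N : Subgroup G) [N.Normal] {g h : G}
    (hm : g * h⁻¹ ∈ N) : (g : G ⧸ N) = h := by
  have h1 : ((g * h⁻¹ : G) : G ⧸ N) = 1 := (QuotientGroup.eq_one_iff _).mpr hm
  rwa [QuotientGroup.mk_mul, QuotientGroup.mk_inv, mul_inv_eq_one] at h1

section Aux

variable {G : Type*} [Group G] (x y : G) (F : ℕ × ℕ → Subgroup G)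

private lemma aux_normal
    (h10 : F (1, 0) = Subgroup.normalClosure {x})
    (h01 : F (0, 1) = Subgroup.normalClosure {y})
    (hrec : ∀ m : ℕ × ℕ, 2 ≤ m.1 + m.2 →
      F m = ⨆ (q : (ℕ × ℕ) × (ℕ × ℕ)) (_ : q.1 ≠ 0) (_ : q.2 ≠ 0) (_ : q.1 + q.2 = m),
        ⁅F q.1, F q.2⁆) :
    ∀ a : ℕ × ℕ, a ≠ 0 → (F a).Normal := by
  have key : ∀ n : ℕ, ∀ a : ℕ × ℕ, a.1 + a.2 = n → a ≠ 0 → (F a).Normal := by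
    intro n
    induction n using Nat.strong_induction_on with
    | _ n ih =>
      intro a hsum ha
      rcases lt_or_ge n 2 with h2 | h2
      · have h1 := pos_of_ne_zero' ha
        have : a = (1, 0) ∨ a = (0, 1) := by
          rcases a with ⟨a1, a2⟩
          simp only [Prod.mk.injEq] at *
          omega
        rcases this with h | h
        · rw [h, h10]; exact Subgroup.normalClosure_normal
        · rw [h, h01]; exact Subgroup.normalClosure_normal
      · rw [hrec a (by omega)]
        refine normal_iSup_aux fun q => normal_iSup_aux fun hq1 => normal_iSup_aux fun hq2 =>
          normal_iSup_aux fun hq => ?_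
        have e1 : q.1.1 + q.2.1 = a.1 := by
          have := congrArg Prod.fst hq; simpa using this
        have e2 : q.1.2 + q.2.2 = a.2 := by
          have := congrArg Prod.snd hq; simpa using this
        have p1 := pos_of_ne_zero' hq1
        have p2 := pos_of_ne_zero' hq2
        haveI n1 : (F q.1).Normal := ih (q.1.1 + q.1.2) (by omega) q.1 rfl hq1
        haveI n2 : (F q.2).Normal := ih (q.2.1 + q.2.2) (by omega) q.2 rfl hq2
        exact Subgroup.commutator_normal (F q.1) (F q.2)
  exact fun a ha => key (a.1 + a.2) a rfl ha

private lemma aux_mono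
    (h10 : F (1, 0) = Subgroup.normalClosure {x})
    (h01 : F (0, 1) = Subgroup.normalClosure {y})
    (hrec : ∀ m : ℕ × ℕ, 2 ≤ m.1 + m.2 →
      F m = ⨆ (q : (ℕ × ℕ) × (ℕ × ℕ)) (_ : q.1 ≠ 0) (_ : q.2 ≠ 0) (_ : q.1 + q.2 = m),
        ⁅F q.1, F q.2⁆) :
    ∀ a b : ℕ × ℕ, b ≠ 0 → b.1 ≤ a.1 → b.2 ≤ a.2 → F a ≤ F b := by
  have hN := aux_normal x y F h10 h01 hrec
  have key : ∀ n : ℕ, ∀ a b : ℕ × ℕ, a.1 + a.2 = n → b ≠ 0 → b.1 ≤ a.1 → b.2 ≤ a.2 →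
      F a ≤ F b := by
    intro n
    induction n using Nat.strong_induction_on with
    | _ n ih =>
      intro a b hsum hb hb1 hb2
      have hbpos := pos_of_ne_zero' hb
      rcases lt_or_ge n 2 with h2 | h2
      · have : a = b := by
          rcases a with ⟨a1, a2⟩; rcases b with ⟨b1, b2⟩
          simp only [Prod.mk.injEq] at *
          omega
        rw [this]
      · rw [hrec a (by omega)]
        refine iSup_le fun q => iSup_le fun hq1 => iSup_le fun hq2 => iSup_le fun hq => ?_
        have e1 : q.1.1 + q.2.1 = a.1 := by
          have := congrArg Prod.fst hq; simpa using this
        have e2 : q.1.2 + q.2.2 = a.2 := by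
          have := congrArg Prod.snd hq; simpa using this
        have p1 := pos_of_ne_zero' hq1
        have p2 := pos_of_ne_zero' hq2
        haveI := hN b hb
        by_cases c1 : b.1 ≤ q.1.1 ∧ b.2 ≤ q.1.2
        · have h1 : F q.1 ≤ F b := ih (q.1.1 + q.1.2) (by omega) q.1 b rfl hb c1.1 c1.2
          exact le_trans (Subgroup.commutator_mono h1 le_top) (Subgroup.commutator_le_left (F b) ⊤)
        by_cases c2 : b.1 ≤ q.2.1 ∧ b.2 ≤ q.2.2
        · have h1 : F q.2 ≤ F b := ih (q.2.1 + q.2.2) (by omega) q.2 b rfl hb c2.1 c2.2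
          exact le_trans (Subgroup.commutator_mono le_top h1) (Subgroup.commutator_le_right ⊤ (F b))
        · set b1 : ℕ × ℕ := (min q.1.1 b.1, min q.1.2 b.2) with hb1def
          set b2 : ℕ × ℕ := (b.1 - b1.1, b.2 - b1.2) with hb2def
          have hb1ne : b1 ≠ 0 := by
            simp only [hb1def, Ne, Prod.mk_eq_zero]
            omega
          have hb2ne : b2 ≠ 0 := by
            simp only [hb2def, hb1def, Ne, Prod.mk_eq_zero]
            omega
          have hbsum2 : 2 ≤ b.1 + b.2 := by omega
          have hle1 : F q.1 ≤ F b1 :=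
            ih (q.1.1 + q.1.2) (by omega) q.1 b1 rfl hb1ne (by simp [hb1def]) (by simp [hb1def])
          have hle2 : F q.2 ≤ F b2 :=
            ih (q.2.1 + q.2.2) (by omega) q.2 b2 rfl hb2ne
              (by simp only [hb2def, hb1def]; omega) (by simp only [hb2def, hb1def]; omega)
          have hbsumeq : b1 + b2 = b := by
            rcases b with ⟨bb1, bb2⟩
            simp only [hb1def, hb2def, Prod.mk_add_mk, Prod.mk.injEq]
            omega
          refine le_trans (Subgroup.commutator_mono hle1 hle2) ?_
          rw [hrec b hbsum2]
          exact le_iSup_of_le (b1, b2) (le_iSup_of_le hb1ne (le_iSup_of_le hb2ne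
            (le_iSup_of_le hbsumeq le_rfl)))
  exact fun a b hb h1 h2 => key (a.1 + a.2) a b rfl hb h1 h2

end Aux

open scoped commutatorElement

/-- if `f` is an automorphism of a group generated by `x, y` with
`f(x)x⁻¹ ∈ F(m+(1,0))` and `f(y)y⁻¹ ∈ F(m+(0,1))`, then
`f(yⁿxy⁻ⁿ)·(yⁿx⁻¹y⁻ⁿ) ∈ F(m+(1,0))` for every integer `n`. -/
theorem statement16 {G : Type*} [Group G] (x y : G)
    (hgen : Subgroup.closure {x, y} = ⊤)
    (F : ℕ × ℕ → Subgroup G)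
    (h10 : F (1, 0) = Subgroup.normalClosure {x})
    (h01 : F (0, 1) = Subgroup.normalClosure {y})
    (hrec : ∀ m : ℕ × ℕ, 2 ≤ m.1 + m.2 →
      F m = ⨆ (q : (ℕ × ℕ) × (ℕ × ℕ)) (_ : q.1 ≠ 0) (_ : q.2 ≠ 0) (_ : q.1 + q.2 = m),
        ⁅F q.1, F q.2⁆)
    (m : ℕ × ℕ) (hm : m ≠ 0)
    (f : G ≃* G)
    (hx : f x * x⁻¹ ∈ F (m + (1, 0)))
    (hy : f y * y⁻¹ ∈ F (m + (0, 1))) :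
    ∀ n : ℤ, f (y ^ n * x * y ^ (-n)) * (y ^ n * x⁻¹ * y ^ (-n)) ∈ F (m + (1, 0)) := by
  intro n
  have hmpos := pos_of_ne_zero' hm
  have hN := aux_normal x y F h10 h01 hrec
  have hmono := aux_mono x y F h10 h01 hrec
  have hNe10 : (m + (1, 0) : ℕ × ℕ) ≠ 0 := by
    rcases m with ⟨m1, m2⟩; simp only [Prod.mk_add_mk, Ne, Prod.mk_eq_zero]; omega
  have hNe01 : (m + (0, 1) : ℕ × ℕ) ≠ 0 := by
    rcases m with ⟨m1, m2⟩; simp only [Prod.mk_add_mk, Ne, Prod.mk_eq_zero]; omega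
  haveI hNn : (F (m + (1, 0))).Normal := hN _ hNe10
  haveI hMn : (F (m + (0, 1))).Normal := hN _ hNe01
  set N := F (m + (1, 0))
  set M := F (m + (0, 1))
  set u : G := (f y) ^ (-n) * y ^ n with hudef
  -- u ∈ M
  have hyq : ((f y : G) : G ⧸ M) = (y : G ⧸ M) := mk_eq_of M hy
  have huM : u ∈ M := by
    rw [← QuotientGroup.eq_one_iff]
    rw [hudef, QuotientGroup.mk_mul, QuotientGroup.mk_zpow, QuotientGroup.mk_zpow, hyq]
    group
  -- f x ∈ F (1,0)
  have hN10 : N ≤ F (1, 0) := hmono (m + (1, 0)) (1, 0)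
    (by simp [Prod.mk_eq_zero]) (by simp) (by simp)
  have hfx10 : f x ∈ F (1, 0) := by
    have hx' : f x * x⁻¹ ∈ F (1, 0) := hN10 hx
    have hxmem : x ∈ F (1, 0) := by
      rw [h10]; exact Subgroup.subset_normalClosure (Set.mem_singleton x)
    simpa using mul_mem hx' hxmem
  -- commutator ⁅u, f x⁆ ∈ N
  have hM01 : M ≤ F (0, 1) := hmono (m + (0, 1)) (0, 1)
    (by simp [Prod.mk_eq_zero]) (by simp) (by simp)
  have hcommN : ⁅u, f x⁆ ∈ N := by
    have h1 : ⁅u, f x⁆ ∈ ⁅M, F (1, 0)⁆ := Subgroup.commutator_mem_commutator huM hfx10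
    have h2 : ⁅M, F (1, 0)⁆ ≤ F (m + (1, 1)) := by
      have hsum : 2 ≤ (m + (1, 1) : ℕ × ℕ).1 + (m + (1, 1) : ℕ × ℕ).2 := by
        rcases m with ⟨m1, m2⟩; simp [Prod.mk_add_mk]; omega
      rw [hrec _ hsum]
      refine le_iSup_of_le (m + (0, 1), (1, 0)) (le_iSup_of_le hNe01
        (le_iSup_of_le (by simp [Prod.mk_eq_zero]) (le_iSup_of_le ?_ le_rfl)))
      rcases m with ⟨m1, m2⟩
      simp only [Prod.mk_add_mk, Prod.mk.injEq]
    have h3 : F (m + (1, 1)) ≤ N := hmono (m + (1, 1)) (m + (1, 0)) hNe10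
      (by rcases m with ⟨m1, m2⟩; simp) (by rcases m with ⟨m1, m2⟩; simp)
    exact h3 (h2 h1)
  -- pass to quotient G ⧸ N
  rw [← QuotientGroup.eq_one_iff]
  have hfg : f (y ^ n * x * y ^ (-n)) = (f y) ^ n * f x * (f y) ^ (-n) := by
    simp [map_mul, map_zpow]
  rw [hfg]
  have hfxq : ((f x : G) : G ⧸ N) = (x : G ⧸ N) := mk_eq_of N hx
  have hswap : ((x : G ⧸ N)) * (((f y : G) : G ⧸ N) ^ (-n) * (y : G ⧸ N) ^ n)
      = (((f y : G) : G ⧸ N) ^ (-n) * (y : G ⧸ N) ^ n) * (x : G ⧸ N) := by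
    have h1 : ((⁅u, f x⁆ : G) : G ⧸ N) = 1 := (QuotientGroup.eq_one_iff _).mpr hcommN
    rw [show ((⁅u, f x⁆ : G) : G ⧸ N) = ⁅((u : G) : G ⧸ N), ((f x : G) : G ⧸ N)⁆ from
      map_commutatorElement (QuotientGroup.mk' N) u (f x)] at h1
    rw [commutatorElement_eq_one_iff_mul_comm] at h1
    have h2 : ((u : G) : G ⧸ N) = ((f y : G) : G ⧸ N) ^ (-n) * (y : G ⧸ N) ^ n := by
      rw [hudef, QuotientGroup.mk_mul, QuotientGroup.mk_zpow, QuotientGroup.mk_zpow]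
    rw [h2, hfxq] at h1
    exact h1.symm
  set a : G ⧸ N := ((f y : G) : G ⧸ N)
  set b : G ⧸ N := (y : G ⧸ N)
  set ξ : G ⧸ N := (x : G ⧸ N)
  calc (((f y ^ n * f x * f y ^ (-n)) * (y ^ n * x⁻¹ * y ^ (-n)) : G) : G ⧸ N)
      = a ^ n * ((f x : G) : G ⧸ N) * a ^ (-n) * (b ^ n * ξ⁻¹ * b ^ (-n)) := by
        simp only [QuotientGroup.mk_mul, QuotientGroup.mk_zpow, QuotientGroup.mk_inv]
        rfl
    _ = a ^ n * ξ * a ^ (-n) * (b ^ n * ξ⁻¹ * b ^ (-n)) := by rw [hfxq]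
    _ = a ^ n * (ξ * (a ^ (-n) * b ^ n)) * ξ⁻¹ * b ^ (-n) := by group
    _ = a ^ n * ((a ^ (-n) * b ^ n) * ξ) * ξ⁻¹ * b ^ (-n) := by rw [hswap]
    _ = 1 := by group
end
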